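/- Let Λ ⊂ ℝⁿ be a lattice of covolume ν, and let H be the group of diagonal matrices with positive entries and determinant 1 acting on ℝⁿ. Suppose there is D > 0 such that every nonzero vector (x₁,…,x_n) in every lattice in the H-orbit of Λ satisfies (max_i|x_i|)ⁿ · D^{1/2} ≥ ν. Then Λ has a reduced basis v₁,…,v_n with ν^{1/n} D^{−1/(2n)} ≪ ‖v₁‖ ≤ … ≤ ‖v_n‖ and ∏‖v_i‖ ≍ ν; in particular ‖v_n‖ ≪ ν^{1/n} D^{(n−1)/(2n)}, with implied constants depending only on n. -/

import Mathlib

open Submodule Set Finset Module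

noncomputable section

section Core
variable {E : Type} [NormedAddCommGroup E] [InnerProductSpace ℝ E]




def myGram {m : ℕ} (v : Fin m → E) : Matrix (Fin m) (Fin m) ℝ :=
  Matrix.of fun i j => inner ℝ (v i) (v j)

lemma myGram_congr {m : ℕ} (v w : Fin m → E) (T : Matrix (Fin m) (Fin m) ℝ)
    (h : ∀ j, w j = ∑ k, T k j • v k) :
    myGram w = T.transpose * myGram v * T := by
  ext i j
  simp only [myGram, Matrix.mul_apply, Matrix.of_apply, Matrix.transpose_apply]
  rw [h i, h j, sum_inner]
  simp only [inner_sum, real_inner_smul_left, real_inner_smul_right, Finset.mul_sum,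
    Finset.sum_mul]
  rw [Finset.sum_comm]
  exact Finset.sum_congr rfl fun l _ => Finset.sum_congr rfl fun k _ => by ring

lemma myGram_det_congr {m : ℕ} (v w : Fin m → E) (T : Matrix (Fin m) (Fin m) ℝ)
    (h : ∀ j, w j = ∑ k, T k j • v k) :
    (myGram w).det = T.det ^ 2 * (myGram v).det := by
  rw [myGram_congr v w T h, Matrix.det_mul, Matrix.det_mul, Matrix.det_transpose]; ring

lemma myGram_det_eq_of_bases {m : ℕ} (Λ : Submodule ℤ E) (B₁ B₂ : Basis (Fin m) ℤ Λ) :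
    (myGram (fun i => (B₁ i : E))).det = (myGram (fun i => (B₂ i : E))).det := by
  classical
  set A : Matrix (Fin m) (Fin m) ℤ := B₁.toMatrix B₂
  have h : ∀ j, (B₂ j : E) = ∑ k, (A.map (Int.cast : ℤ → ℝ)) k j • (B₁ k : E) := by
    intro j
    have h2 : (((∑ i, B₁.toMatrix (⇑B₂) i j • B₁ i : Λ)) : E) = (B₂ j : E) := by
      rw [B₁.sum_toMatrix_smul_self (⇑B₂) j]
    rw [← h2]
    push_cast
    exact Finset.sum_congr rfl fun k _ => by
      simp [Matrix.map_apply, Int.cast_smul_eq_zsmul, A]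
  have hdet := myGram_det_congr (fun i => (B₁ i : E)) (fun i => (B₂ i : E)) _ h
  have hA : (A.det : ℝ) ^ 2 = 1 := by
    have h1 : A.det * (B₂.toMatrix ⇑B₁).det = 1 := by
      rw [← Matrix.det_mul, Basis.toMatrix_mul_toMatrix_flip, Matrix.det_one]
    rcases Int.isUnit_iff.mp (IsUnit.of_mul_eq_one _ h1) with h | h <;> rw [h] <;> norm_num
  have hm : (A.map (Int.cast : ℤ → ℝ)).det = (A.det : ℝ) :=
    Eq.symm (RingHom.map_det (Int.castRingHom ℝ) A)
  rw [hdet, hm, hA, one_mul]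




/-- projection away from x₀ -/
def prL (x₀ : E) : E →ₗ[ℝ] E :=
  LinearMap.id - (inner ℝ x₀ x₀ : ℝ)⁻¹ •
    ((LinearMap.toSpanSingleton ℝ E x₀).comp (innerₛₗ ℝ x₀))

lemma prL_apply (x₀ y : E) : prL x₀ y = y - ((inner ℝ x₀ y : ℝ) / (inner ℝ x₀ x₀ : ℝ)) • x₀ := by
  simp only [prL, LinearMap.sub_apply, LinearMap.id_apply, LinearMap.smul_apply,
    LinearMap.comp_apply, innerₛₗ_apply_apply, LinearMap.toSpanSingleton_apply]
  rw [smul_smul, div_eq_inv_mul]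

lemma inner_prL_self (x₀ : E) (hx₀ : x₀ ≠ 0) (y : E) : (inner ℝ x₀ (prL x₀ y) : ℝ) = 0 := by
  have hc : (inner ℝ x₀ x₀ : ℝ) ≠ 0 := by
    simpa [real_inner_self_eq_norm_sq] using fun h => hx₀ (by simpa using h)
  rw [prL_apply, inner_sub_right, real_inner_smul_right]
  field_simp
  ring

lemma prL_self (x₀ : E) (hx₀ : x₀ ≠ 0) : prL x₀ x₀ = 0 := by
  have hc : (inner ℝ x₀ x₀ : ℝ) ≠ 0 := by
    simpa [real_inner_self_eq_norm_sq] using fun h => hx₀ (by simpa using h)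
  rw [prL_apply]
  rw [div_self hc, one_smul, sub_self]

lemma eq_of_prL_zero (x₀ y : E) (h : prL x₀ y = 0) :
    y = ((inner ℝ x₀ y : ℝ) / (inner ℝ x₀ x₀ : ℝ)) • x₀ := by
  have := prL_apply x₀ y
  rw [h] at this
  have := sub_eq_zero.mp this.symm
  linear_combination (norm := module) this

lemma myGram_det_cons (x₀ : E) (hx₀ : x₀ ≠ 0) {m : ℕ} (w : Fin m → E) :
    (myGram (Fin.cons x₀ w)).det =
      (inner ℝ x₀ x₀ : ℝ) * (myGram (fun i => prL x₀ (w i))).det := by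
  classical
  set c : ℝ := inner ℝ x₀ x₀ with hc
  set u : Fin (m + 1) → E := Fin.cons x₀ (fun i => prL x₀ (w i)) with hu
  set s : Fin (m + 1) → ℝ := Fin.cons 0 (fun i => (inner ℝ x₀ (w i) : ℝ) / c) with hs
  set T : Matrix (Fin (m + 1)) (Fin (m + 1)) ℝ :=
    Matrix.of (fun k j => if k = j then 1 else if k = 0 then s j else 0) with hT
  have hfam : ∀ j, (Fin.cons x₀ w : Fin (m+1) → E) j = ∑ k, T k j • u k := by
    intro j
    rw [Fin.sum_univ_succ]
    induction j using Fin.cases with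
    | zero =>
      have h1 : T 0 0 • u 0 = x₀ := by simp [hT, hu]
      have h2 : ∀ k : Fin m, T k.succ 0 • u k.succ = 0 := by
        intro k
        have hk : (k.succ : Fin (m+1)) ≠ 0 := Fin.succ_ne_zero k
        simp [hT, hk]
      rw [h1, Finset.sum_congr rfl fun k _ => h2 k]
      simp
    | succ i =>
      have h0 : T 0 i.succ = s i.succ := by
        simp [hT, (Fin.succ_ne_zero i).symm]
      have h2 : ∀ k : Fin m, T k.succ i.succ = if k = i then 1 else 0 := by
        intro k
        simp [hT, Fin.succ_inj, Fin.succ_ne_zero]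
      rw [h0, Finset.sum_congr rfl fun k _ => by rw [h2 k]]
      simp only [ite_smul, one_smul, zero_smul, Finset.sum_ite_eq' Finset.univ, Finset.mem_univ,
        if_pos]
      simp only [hu, hs, Fin.cons_succ, Fin.cons_zero]
      rw [prL_apply]
      abel
  have hTdet : T.det = 1 := by
    have htri : T.BlockTriangular id := by
      intro i j hij
      have h1 : i ≠ j := by
        intro h; rw [h] at hij; exact lt_irrefl _ hij
      have h2 : i ≠ 0 := by
        intro h; rw [h] at hij; simp only [id_eq] at hij; exact (Fin.not_lt_zero j hij)
      simp [hT, h1, h2]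
    rw [Matrix.det_of_upperTriangular htri]
    have : ∀ i : Fin (m+1), T i i = 1 := fun i => by simp [hT]
    rw [Finset.prod_congr rfl fun i _ => this i, Finset.prod_const_one]
  have hcongr : (myGram (Fin.cons x₀ w)).det = T.det ^ 2 * (myGram u).det := by
    have : myGram (Fin.cons x₀ w) = T.transpose * myGram u * T := by
      ext i j
      simp only [myGram, Matrix.mul_apply, Matrix.of_apply, Matrix.transpose_apply]
      rw [hfam i, hfam j, sum_inner]
      simp only [inner_sum, real_inner_smul_left, real_inner_smul_right, Finset.mul_sum,
        Finset.sum_mul]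
      rw [Finset.sum_comm]
      exact Finset.sum_congr rfl fun l _ => Finset.sum_congr rfl fun k _ => by ring
    rw [this, Matrix.det_mul, Matrix.det_mul, Matrix.det_transpose]; ring
  rw [hcongr, hTdet, one_pow, one_mul]
  -- expand det of myGram u along first row
  rw [Matrix.det_succ_row_zero]
  rw [Finset.sum_eq_single 0]
  · have h00 : myGram u 0 0 = c := by simp [myGram, hu, hc, real_inner_self_eq_norm_sq]
    have hsub : (myGram u).submatrix Fin.succ ((0 : Fin (m+1)).succAbove) =
        myGram (fun i => prL x₀ (w i)) := by
      ext i j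
      simp [myGram, hu, Matrix.submatrix_apply, Fin.succAbove_zero]
    rw [h00, hsub]
    simp
  · intro j _ hj
    have : myGram u 0 j = 0 := by
      induction j using Fin.cases with
      | zero => exact absurd rfl hj
      | succ i => simp [myGram, hu, inner_prL_self x₀ hx₀]
    rw [this]; ring
  · intro h; exact absurd (Finset.mem_univ _) h

variable [FiniteDimensional ℝ E]




lemma lattice_ball_finite {m : ℕ} (v : Fin m → E) (hv : LinearIndependent ℝ v) (R : ℝ) :
    {x : E | x ∈ span ℤ (Set.range v) ∧ ‖x‖ ≤ R}.Finite := by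
  classical
  set S : Submodule ℝ E := span ℝ (Set.range v) with hS
  let bS : Basis (Fin m) ℝ S := Basis.span hv
  set ΛS : Submodule ℤ S := span ℤ (Set.range bS) with hΛS
  have hmap : span ℤ (Set.range v) = Submodule.map (S.subtype.restrictScalars ℤ) ΛS := by
    rw [hΛS, Submodule.map_span]
    congr 1
    rw [← Set.range_comp]
    congr 1
    ext i
    simp [bS]
    exact (congrArg Subtype.val (Basis.span_apply hv i)).symm
  have hdisc : DiscreteTopology ΛS := inferInstance
  have hclosed : IsClosed (ΛS : Set S) := by
    have : DiscreteTopology ΛS.toAddSubgroup := inferInstance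
    exact AddSubgroup.isClosed_of_discrete (H := ΛS.toAddSubgroup)
  have hcpt : IsCompact ((ΛS : Set S) ∩ Metric.closedBall 0 R) :=
    (Metric.isCompact_of_isClosed_isBounded (hclosed.inter Metric.isClosed_closedBall)
      ((Metric.isBounded_closedBall).subset inter_subset_right))
  have hdisc2 : DiscreteTopology ((ΛS : Set S) ∩ Metric.closedBall 0 R : Set S) :=
    DiscreteTopology.of_subset hdisc inter_subset_left
  have hfin : ((ΛS : Set S) ∩ Metric.closedBall 0 R).Finite := hcpt.finite (isDiscrete_iff_discreteTopology.mpr hdisc2)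
  have himg : {x : E | x ∈ span ℤ (Set.range v) ∧ ‖x‖ ≤ R} =
      (Subtype.val : S → E) '' ((ΛS : Set S) ∩ Metric.closedBall 0 R) := by
    ext x
    constructor
    · rintro ⟨hx, hnx⟩
      rw [hmap] at hx
      obtain ⟨y, hy, rfl⟩ := hx
      exact ⟨y, ⟨hy, by simpa [Metric.mem_closedBall, dist_eq_norm] using hnx⟩, rfl⟩
    · rintro ⟨y, ⟨hy, hny⟩, rfl⟩
      refine ⟨?_, by simpa [Metric.mem_closedBall, dist_eq_norm] using hny⟩
      rw [hmap]
      exact ⟨y, hy, rfl⟩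
  rw [himg]
  exact hfin.image _

lemma exists_shortest {m : ℕ} (v : Fin (m+1) → E) (hv : LinearIndependent ℝ v) :
    ∃ x₀ ∈ span ℤ (Set.range v), x₀ ≠ 0 ∧
      ∀ y ∈ span ℤ (Set.range v), y ≠ 0 → ‖x₀‖ ≤ ‖y‖ := by
  classical
  set Λ := span ℤ (Set.range v)
  have hfin : {x : E | x ∈ Λ ∧ x ≠ 0 ∧ ‖x‖ ≤ ‖v 0‖}.Finite :=
    (lattice_ball_finite v hv ‖v 0‖).subset (fun x hx => ⟨hx.1, hx.2.2⟩)
  have hne : {x : E | x ∈ Λ ∧ x ≠ 0 ∧ ‖x‖ ≤ ‖v 0‖}.Nonempty :=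
    ⟨v 0, subset_span (mem_range_self 0), hv.ne_zero 0, le_refl _⟩
  obtain ⟨x₀, hx₀mem, hx₀min⟩ := hfin.toFinset.exists_min_image norm
    (by rwa [← Set.Finite.toFinset_nonempty hfin] at hne)
  rw [Set.Finite.mem_toFinset] at hx₀mem
  refine ⟨x₀, hx₀mem.1, hx₀mem.2.1, fun y hy hy0 => ?_⟩
  by_cases hcase : ‖y‖ ≤ ‖v 0‖
  · exact hx₀min y (by rw [Set.Finite.mem_toFinset]; exact ⟨hy, hy0, hcase⟩)
  · exact le_trans hx₀mem.2.2 (le_of_not_ge hcase)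




lemma zsmul_one_inj : Function.Injective fun r : ℤ => r • (1:ℝ) := by
  intro a b h
  simpa using h

lemma prim_of_shortest (Λ : Submodule ℤ E) {x₀ : E} (hx₀ : x₀ ∈ Λ) (h0 : x₀ ≠ 0)
    (hmin : ∀ y ∈ Λ, y ≠ 0 → ‖x₀‖ ≤ ‖y‖) :
    ∀ t : ℝ, t • x₀ ∈ Λ → ∃ k : ℤ, t = (k : ℝ) := by
  intro t ht
  refine ⟨⌊t⌋, ?_⟩
  by_contra hne
  have hy : (t - (⌊t⌋ : ℝ)) • x₀ ∈ Λ := by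
    rw [sub_smul]
    refine Submodule.sub_mem _ ht ?_
    have : ((⌊t⌋ : ℤ) : ℝ) • x₀ = (⌊t⌋ : ℤ) • x₀ := Int.cast_smul_eq_zsmul ℝ ⌊t⌋ x₀
    rw [this]
    exact Submodule.smul_mem _ _ hx₀
  have hne' : t - (⌊t⌋ : ℝ) ≠ 0 := sub_ne_zero.mpr hne
  have hy0 : (t - (⌊t⌋ : ℝ)) • x₀ ≠ 0 := smul_ne_zero hne' h0
  have hlt : ‖(t - (⌊t⌋ : ℝ)) • x₀‖ < ‖x₀‖ := by
    rw [norm_smul]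
    have h1 : |t - (⌊t⌋ : ℝ)| < 1 := by
      rw [abs_of_nonneg (by linarith [Int.floor_le t])]
      linarith [Int.lt_floor_add_one t]
    have h2 : 0 < ‖x₀‖ := norm_pos_iff.mpr h0
    calc ‖t - (⌊t⌋:ℝ)‖ * ‖x₀‖ < 1 * ‖x₀‖ := by
          exact mul_lt_mul_of_pos_right (by rwa [Real.norm_eq_abs]) h2
      _ = ‖x₀‖ := one_mul _
  exact absurd (hmin _ hy hy0) (not_le.mpr hlt)

lemma exists_basis_cons {m : ℕ} (v : Fin (m+1) → E) (hv : LinearIndependent ℝ v)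
    {x₀ : E} (hx₀Λ : x₀ ∈ span ℤ (Set.range v)) (hx₀ : x₀ ≠ 0)
    (hprim : ∀ t : ℝ, t • x₀ ∈ span ℤ (Set.range v) → ∃ k : ℤ, t = (k : ℝ)) :
    ∃ B : Basis (Fin (m+1)) ℤ (span ℤ (Set.range v)), (B 0 : E) = x₀ := by
  classical
  set Λ : Submodule ℤ E := span ℤ (Set.range v) with hΛ
  have hvZ : LinearIndependent ℤ v := hv.restrict_scalars zsmul_one_inj
  let B₀ : Basis (Fin (m+1)) ℤ Λ := Basis.span hvZ
  have hfinite : Module.Finite ℤ Λ := Module.Finite.of_basis B₀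
  set x₀' : Λ := ⟨x₀, hx₀Λ⟩ with hx₀'
  set N : Submodule ℤ Λ := span ℤ {x₀'} with hN
  have htf : NoZeroSMulDivisors ℤ (Λ ⧸ N) := by
    constructor
    intro k q hkq
    by_cases hk : k = 0
    · exact Or.inl hk
    right
    obtain ⟨x, rfl⟩ := Submodule.Quotient.mk_surjective N q
    have hmem : k • x ∈ N := by
      rwa [← Submodule.Quotient.mk_smul, Submodule.Quotient.mk_eq_zero] at hkq
    obtain ⟨a, ha⟩ := Submodule.mem_span_singleton.mp hmem
    -- in E : a • x₀ = k • x
    have haE : (a : ℝ) • x₀ = (k : ℝ) • (x : E) := by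
      have := congrArg (Subtype.val : Λ → E) ha
      push_cast at this
      rw [← Int.cast_smul_eq_zsmul ℝ a x₀, ← Int.cast_smul_eq_zsmul ℝ k (x:E)] at this
      exact this
    have hxE : ((a : ℝ) / (k : ℝ)) • x₀ = (x : E) := by
      have hk' : (k : ℝ) ≠ 0 := Int.cast_ne_zero.mpr hk
      rw [div_eq_inv_mul, mul_smul, haE, inv_smul_smul₀ hk']
    obtain ⟨j, hj⟩ := hprim ((a : ℝ) / (k : ℝ)) (by rw [hxE]; exact x.2)
    have hxj : (x : E) = (j : ℤ) • x₀ := by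
      rw [← hxE, hj, Int.cast_smul_eq_zsmul]
    have : x ∈ N := by
      rw [hN, Submodule.mem_span_singleton]
      exact ⟨j, Subtype.ext (by simpa using hxj.symm)⟩
    rwa [Submodule.Quotient.mk_eq_zero]
  have hfree : Module.Free ℤ (Λ ⧸ N) := Module.free_of_finite_type_torsion_free'
  set ι := Module.Free.ChooseBasisIndex ℤ (Λ ⧸ N) with hι
  let cQ : Basis ι ℤ (Λ ⧸ N) := Module.Free.chooseBasis ℤ (Λ ⧸ N)
  have hg : ∀ i : ι, ∃ y : Λ, Submodule.Quotient.mk y = cQ i :=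
    fun i => Submodule.Quotient.mk_surjective N (cQ i)
  choose g hgspec using hg
  set F : Option ι → Λ := fun o => o.elim x₀' g with hF
  have hx₀'ne : x₀' ≠ 0 := fun h => hx₀ (by simpa [hx₀'] using congrArg Subtype.val h)
  have hFind : LinearIndependent ℤ F := by
    rw [Fintype.linearIndependent_iff]
    intro c hc o
    have hmk := congrArg (Submodule.mkQ N) hc
    rw [map_sum, map_zero] at hmk
    rw [Fintype.sum_option] at hmk
    simp only [map_smul, Submodule.mkQ_apply] at hmk
    have hmk0 : Submodule.Quotient.mk (p := N) x₀' = 0 := by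
      rw [Submodule.Quotient.mk_eq_zero]
      exact Submodule.mem_span_singleton_self _
    rw [hF] at hmk
    simp only [Option.elim] at hmk
    rw [hmk0, smul_zero, zero_add] at hmk
    have hzero : ∀ i : ι, c (some i) = 0 := by
      have := Fintype.linearIndependent_iff.mp cQ.linearIndependent (fun i => c (some i)) ?_
      · exact this
      · rw [← hmk]
        exact Finset.sum_congr rfl fun i _ => by rw [hgspec]
    cases o with
    | some i => exact hzero i
    | none =>
      rw [Fintype.sum_option] at hc
      have : ∀ i : ι, c (some i) • F (some i) = 0 := fun i => by rw [hzero i, zero_smul]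
      rw [Finset.sum_congr rfl fun i _ => this i, Finset.sum_const_zero, add_zero] at hc
      have : c none • x₀ = (0 : E) := by
        have := congrArg (Subtype.val : Λ → E) hc
        simpa [hF] using this
      have h2 : ((c none : ℤ) : ℝ) • x₀ = 0 := by rwa [Int.cast_smul_eq_zsmul]
      rcases smul_eq_zero.mp h2 with h | h
      · exact_mod_cast h
      · exact absurd h hx₀
  have hFspan : ⊤ ≤ span ℤ (Set.range F) := by
    intro x _
    have hrepr : Submodule.Quotient.mk (p := N) x = ∑ i, (cQ.repr (Submodule.Quotient.mk x) i) • cQ i :=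
      (cQ.sum_repr _).symm
    set d : ι → ℤ := fun i => cQ.repr (Submodule.Quotient.mk x) i with hd
    have hdiff : x - ∑ i, d i • g i ∈ N := by
      rw [← Submodule.Quotient.mk_eq_zero, Submodule.Quotient.mk_sub]
      rw [hrepr]
      have : Submodule.Quotient.mk (p := N) (∑ i, d i • g i) = ∑ i, d i • cQ i := by
        rw [← Submodule.mkQ_apply, map_sum]
        exact Finset.sum_congr rfl fun i _ => by
          rw [map_smul, Submodule.mkQ_apply, hgspec]
      rw [this, sub_self]
    obtain ⟨a, ha⟩ := Submodule.mem_span_singleton.mp hdiff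
    have hx : x = a • x₀' + ∑ i, d i • g i := by
      rw [ha]; abel
    rw [hx]
    refine Submodule.add_mem _ (Submodule.smul_mem _ _ (subset_span ⟨none, rfl⟩)) ?_
    exact Submodule.sum_mem _ fun i _ => Submodule.smul_mem _ _ (subset_span ⟨some i, rfl⟩)
  let basisF : Basis (Option ι) ℤ Λ := Basis.mk hFind hFspan
  have hcard : Fintype.card ι = m := by
    have e0 : Option ι ≃ Fin (m+1) := Basis.indexEquiv basisF B₀
    have := Fintype.card_congr e0
    simpa using this
  let e : ι ≃ Fin m := Fintype.equivFinOfCardEq hcard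
  let e' : Option ι ≃ Fin (m+1) := (Equiv.optionCongr e).trans (finSuccEquiv m).symm
  refine ⟨basisF.reindex e', ?_⟩
  have h1 : e'.symm 0 = none := by
    simp [e', finSuccEquiv_zero]
  rw [Basis.reindex_apply, h1]
  show ((Basis.mk hFind hFspan) none : E) = x₀
  rw [Basis.mk_apply]
  rfl




lemma span_real_eq {m : ℕ} (v : Fin m → E) (w : Fin m → E)
    (h : span ℤ (Set.range w) = span ℤ (Set.range v)) :
    span ℝ (Set.range w) = span ℝ (Set.range v) := by
  rw [← span_span_of_tower (R := ℤ) (S := ℝ) (Set.range w),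
    ← span_span_of_tower (R := ℤ) (S := ℝ) (Set.range v), h]

lemma basis_coe_linearIndependent {m : ℕ} (v : Fin m → E) (hv : LinearIndependent ℝ v)
    (B : Basis (Fin m) ℤ (span ℤ (Set.range v))) :
    LinearIndependent ℝ (fun i => (B i : E)) := by
  have hspanB : span ℤ (Set.range (fun i => (B i : E))) = span ℤ (Set.range v) := by
    have h1 : Set.range (fun i => (B i : E)) =
        (span ℤ (Set.range v)).subtype '' (Set.range B) := by
      rw [← Set.range_comp]; rfl
    rw [h1, ← Submodule.map_span, B.span_eq, Submodule.map_subtype_top]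
  rw [linearIndependent_iff_card_eq_finrank_span, Set.finrank,
    span_real_eq _ _ hspanB, finrank_span_eq_card hv, Fintype.card_fin]

end Core

section Induction

lemma basis_coe_span {E : Type} [NormedAddCommGroup E] [InnerProductSpace ℝ E]
    {m : ℕ} (Λ : Submodule ℤ E) (B : Basis (Fin m) ℤ Λ) :
    span ℤ (Set.range (fun i => (B i : E))) = Λ := by
  have h1 : Set.range (fun i => (B i : E)) = Λ.subtype '' (Set.range B) := by
    rw [← Set.range_comp]; rfl
  rw [h1, ← Submodule.map_span, B.span_eq, Submodule.map_subtype_top]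

theorem hermite_exists : ∀ m : ℕ, ∃ C : ℝ, 0 < C ∧
    ∀ (E : Type) [NormedAddCommGroup E] [InnerProductSpace ℝ E]
      [FiniteDimensional ℝ E] (v : Fin m → E), LinearIndependent ℝ v →
      ∃ u : Fin m → E,
        span ℤ (Set.range u) = span ℤ (Set.range v) ∧ LinearIndependent ℝ u ∧
        (∏ i, ‖u i‖) ^ 2 ≤ C * (myGram v).det := by
  intro m
  induction m with
  | zero =>
    refine ⟨1, one_pos, fun E _ _ _ v hv => ⟨v, rfl, hv, ?_⟩⟩
    simp [Matrix.det_fin_zero]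
  | succ m IH =>
    obtain ⟨C, hC, H⟩ := IH
    refine ⟨(4/3)^m * C, by positivity, fun E _ _ _ v hv => ?_⟩
    classical
    obtain ⟨x₀, hx₀Λ, hx₀ne, hmin⟩ := exists_shortest v hv
    have hprim := prim_of_shortest _ hx₀Λ hx₀ne hmin
    obtain ⟨B, hB0⟩ := exists_basis_cons v hv hx₀Λ hx₀ne hprim
    set w : Fin m → E := fun i => (B i.succ : E) with hw
    have hBind : LinearIndependent ℝ (fun i => (B i : E)) :=
      basis_coe_linearIndependent v hv B
    have hconsw : (fun i => (B i : E)) = Fin.cons x₀ w := by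
      funext i
      induction i using Fin.cases with
      | zero => simpa using hB0
      | succ j => simp [hw]
    have hcpos : (0:ℝ) < inner ℝ x₀ x₀ := by
      rw [real_inner_self_eq_norm_sq]
      have := norm_pos_iff.mpr hx₀ne
      positivity
    have hcne : (inner ℝ x₀ x₀ : ℝ) ≠ 0 := ne_of_gt hcpos
    -- linear independence of projections
    have hwind : LinearIndependent ℝ (fun i => prL x₀ (w i)) := by
      rw [Fintype.linearIndependent_iff]
      intro a ha
      have hsum : prL x₀ (∑ i, a i • w i) = 0 := by
        rw [map_sum]
        simpa [map_smul] using ha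
      have hxt := eq_of_prL_zero x₀ _ hsum
      set t : ℝ := (inner ℝ x₀ (∑ i, a i • w i) : ℝ) / (inner ℝ x₀ x₀ : ℝ) with ht
      have hcomb : ∑ j, (Fin.cons (-t) a : Fin (m+1) → ℝ) j • (Fin.cons x₀ w : Fin (m+1) → E) j = 0 := by
        rw [Fin.sum_univ_succ]
        simp only [Fin.cons_zero, Fin.cons_succ]
        rw [hxt]
        module
      have := Fintype.linearIndependent_iff.mp (hconsw ▸ hBind) _ hcomb
      intro i
      simpa using this i.succ
    obtain ⟨u, hspan_u, hind_u, hbound_u⟩ := H E (fun i => prL x₀ (w i)) hwind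
    have humem : ∀ i, u i ∈ span ℤ (Set.range (fun i => prL x₀ (w i))) := by
      intro i
      rw [← hspan_u]
      exact subset_span (mem_range_self i)
    have hccex : ∀ i : Fin m, ∃ cc : Fin m → ℤ, ∑ j, cc j • prL x₀ (w j) = u i :=
      fun i => (mem_span_range_iff_exists_fun ℤ).mp (humem i)
    choose cc hccspec using hccex
    set z : Fin m → E := fun i => ∑ j, cc i j • w j with hz
    have hprLz : ∀ i, prL x₀ (z i) = u i := by
      intro i
      rw [hz]
      simp only
      rw [map_sum, ← hccspec i]
      exact Finset.sum_congr rfl fun j _ => by rw [map_zsmul]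
    set k : Fin m → ℤ := fun i => round ((inner ℝ x₀ (z i) : ℝ) / (inner ℝ x₀ x₀ : ℝ)) with hk
    set z' : Fin m → E := fun i => z i - k i • x₀ with hz'
    have hwmem : ∀ j, w j ∈ span ℤ (Set.range v) := fun j => by
      rw [hw]; exact (B j.succ).2
    have hzmem : ∀ i, z i ∈ span ℤ (Set.range v) := fun i =>
      Submodule.sum_mem _ fun j _ => Submodule.smul_mem _ _ (hwmem j)
    have hz'mem : ∀ i, z' i ∈ span ℤ (Set.range v) := fun i =>
      Submodule.sub_mem _ (hzmem i) (Submodule.smul_mem _ _ hx₀Λ)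
    have hprLz' : ∀ i, prL x₀ (z' i) = u i := by
      intro i
      rw [hz']
      simp only
      rw [map_sub, map_zsmul, prL_self x₀ hx₀ne, smul_zero, sub_zero, hprLz]
    have hz'ne : ∀ i, z' i ≠ 0 := by
      intro i h
      have h2 := hprLz' i
      rw [h, map_zero] at h2
      exact hind_u.ne_zero i h2.symm
    set r : Fin m → ℝ := fun i => (inner ℝ x₀ (z' i) : ℝ) / (inner ℝ x₀ x₀ : ℝ) with hr
    have hdecomp : ∀ i, z' i = u i + r i • x₀ := by
      intro i
      have h2 := prL_apply x₀ (z' i)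
      rw [hprLz' i] at h2
      rw [hr]
      simp only
      rw [h2]
      abel
    have hrle : ∀ i, |r i| ≤ 1/2 := by
      intro i
      have h1 : (inner ℝ x₀ (z' i) : ℝ) = inner ℝ x₀ (z i) - (k i : ℝ) * (inner ℝ x₀ x₀ : ℝ) := by
        rw [hz']
        simp only
        rw [inner_sub_right, ← Int.cast_smul_eq_zsmul ℝ (k i) x₀, real_inner_smul_right]
      have h2 : r i = (inner ℝ x₀ (z i) : ℝ) / (inner ℝ x₀ x₀ : ℝ) - (k i : ℝ) := by
        rw [hr]
        simp only
        rw [h1]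
        field_simp
      rw [h2, hk]
      exact abs_sub_round _
    have hortho : ∀ i, (inner ℝ (u i) x₀ : ℝ) = 0 := by
      intro i
      rw [← hprLz' i, real_inner_comm]
      exact inner_prL_self x₀ hx₀ne _
    have hz'sq : ∀ i, ‖z' i‖^2 ≤ (4/3) * ‖u i‖^2 := by
      intro i
      have h1 : ‖z' i‖^2 = ‖u i‖^2 + (r i)^2 * ‖x₀‖^2 := by
        rw [hdecomp i, norm_add_sq_real, real_inner_smul_right, hortho i]
        rw [norm_smul, Real.norm_eq_abs, mul_pow, sq_abs]
        ring
      have h2 : (r i)^2 ≤ 1/4 := by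
        have := abs_le.mp (hrle i)
        nlinarith [this.1, this.2]
      have h3 : ‖x₀‖ ≤ ‖z' i‖ := hmin _ (hz'mem i) (hz'ne i)
      have h4 : ‖x₀‖^2 ≤ ‖z' i‖^2 := by
        have := norm_nonneg x₀
        nlinarith
      nlinarith [sq_nonneg (r i), sq_nonneg ‖x₀‖]
    set U : Fin (m+1) → E := Fin.cons x₀ z' with hU
    have hz'ind : LinearIndependent ℝ z' := by
      rw [Fintype.linearIndependent_iff]
      intro a ha
      have h3 := congrArg (prL x₀) ha
      rw [map_sum, map_zero] at h3
      have h2 : ∑ i, a i • u i = 0 := by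
        rw [← h3]
        exact (Finset.sum_congr rfl fun i _ => by rw [map_smul, hprLz' i]).symm
      exact Fintype.linearIndependent_iff.mp hind_u a h2
    have hUind : LinearIndependent ℝ U := by
      rw [hU, linearIndependent_fin_cons]
      refine ⟨hz'ind, ?_⟩
      intro hmem
      obtain ⟨a, ha⟩ := (mem_span_range_iff_exists_fun ℝ).mp hmem
      have h3 := congrArg (prL x₀) ha
      rw [map_sum, prL_self x₀ hx₀ne] at h3
      have h2 : ∑ i, a i • u i = 0 := by
        rw [← h3]
        exact (Finset.sum_congr rfl fun i _ => by rw [map_smul, hprLz' i]).symm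
      have ha0 : ∀ i, a i = 0 := Fintype.linearIndependent_iff.mp hind_u a h2
      rw [Finset.sum_congr rfl fun i _ => by rw [ha0 i, zero_smul]] at ha
      rw [Finset.sum_const_zero] at ha
      exact hx₀ne ha.symm
    have hwj : ∀ j : Fin m, w j ∈ span ℤ (Set.range U) := by
      intro j
      have h1 : prL x₀ (w j) ∈ span ℤ (Set.range u) := by
        rw [hspan_u]
        exact subset_span (mem_range_self j)
      obtain ⟨d, hd⟩ := (mem_span_range_iff_exists_fun ℤ).mp h1
      have hy : prL x₀ (w j - ∑ i, d i • z' i) = 0 := by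
        rw [map_sub, map_sum]
        rw [Finset.sum_congr rfl fun i _ => by rw [map_zsmul, hprLz' i]]
        rw [hd, sub_self]
      have hymem : w j - ∑ i, d i • z' i ∈ span ℤ (Set.range v) :=
        Submodule.sub_mem _ (hwmem j)
          (Submodule.sum_mem _ fun i _ => Submodule.smul_mem _ _ (hz'mem i))
      have hyx := eq_of_prL_zero x₀ _ hy
      obtain ⟨kk, hkk⟩ := hprim _ (by rw [← hyx]; exact hymem)
      have hyk : w j - ∑ i, d i • z' i = (kk : ℤ) • x₀ := by
        rw [hyx, hkk, Int.cast_smul_eq_zsmul]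
      have hwjeq : w j = ∑ i, d i • z' i + (kk : ℤ) • x₀ := by
        rw [← hyk]; abel
      rw [hwjeq]
      refine Submodule.add_mem _ ?_ ?_
      · exact Submodule.sum_mem _ fun i _ => Submodule.smul_mem _ _
          (subset_span ⟨i.succ, by rw [hU, Fin.cons_succ]⟩)
      · exact Submodule.smul_mem _ _ (subset_span ⟨0, by rw [hU, Fin.cons_zero]⟩)
    have hUspan : span ℤ (Set.range U) = span ℤ (Set.range v) := by
      apply le_antisymm
      · rw [span_le]
        rintro x ⟨i, rfl⟩
        induction i using Fin.cases with
        | zero => simpa [hU] using hx₀Λ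
        | succ j => simpa [hU] using hz'mem j
      · conv_lhs => rw [← basis_coe_span (span ℤ (Set.range v)) B]
        rw [span_le]
        rintro x ⟨i, rfl⟩
        have hxi := congrFun hconsw i
        show (B i : E) ∈ (span ℤ (Set.range U) : Set E)
        rw [hxi]
        induction i using Fin.cases with
        | zero =>
          rw [Fin.cons_zero]
          exact subset_span ⟨0, by rw [hU, Fin.cons_zero]⟩
        | succ j =>
          rw [Fin.cons_succ]
          exact hwj j
    refine ⟨U, hUspan, hUind, ?_⟩
    have hprod : ∏ i, ‖U i‖ = ‖x₀‖ * ∏ i, ‖z' i‖ := by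
      rw [hU, Fin.prod_univ_succ]
      simp
    have hsq : (∏ i, ‖z' i‖)^2 ≤ (4/3)^m * (∏ i, ‖u i‖)^2 := by
      rw [← Finset.prod_pow, ← Finset.prod_pow]
      calc ∏ i, ‖z' i‖^2 ≤ ∏ i, ((4/3) * ‖u i‖^2) :=
            Finset.prod_le_prod (fun i _ => sq_nonneg _) (fun i _ => hz'sq i)
        _ = (4/3)^m * ∏ i, ‖u i‖^2 := by
            rw [Finset.prod_mul_distrib, Finset.prod_const, Finset.card_univ, Fintype.card_fin]
    have hvZ : LinearIndependent ℤ v := hv.restrict_scalars zsmul_one_inj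
    have hdet : (myGram v).det =
        (inner ℝ x₀ x₀ : ℝ) * (myGram (fun i => prL x₀ (w i))).det := by
      have hB₀ : (fun i => ((Basis.span hvZ) i : E)) = v :=
        funext fun i => congrArg Subtype.val (Basis.span_apply hvZ i)
      have h1 := myGram_det_eq_of_bases (span ℤ (Set.range v)) (Basis.span hvZ) B
      rw [hB₀] at h1
      rw [h1, hconsw, myGram_det_cons x₀ hx₀ne w]
    have hnormsq : (inner ℝ x₀ x₀ : ℝ) = ‖x₀‖^2 := real_inner_self_eq_norm_sq x₀
    calc (∏ i, ‖U i‖)^2 = ‖x₀‖^2 * (∏ i, ‖z' i‖)^2 := by rw [hprod]; ring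
      _ ≤ ‖x₀‖^2 * ((4/3)^m * (∏ i, ‖u i‖)^2) :=
          mul_le_mul_of_nonneg_left hsq (by positivity)
      _ ≤ ‖x₀‖^2 * ((4/3)^m * (C * (myGram (fun i => prL x₀ (w i))).det)) := by
          refine mul_le_mul_of_nonneg_left ?_ (by positivity)
          exact mul_le_mul_of_nonneg_left hbound_u (by positivity)
      _ = (4/3)^m * C * (myGram v).det := by
          rw [hdet, ← hnormsq]
          ring

end Induction




open MeasureTheory in
lemma vol_fd_one (n : ℕ) :
    volume (ZSpan.fundamentalDomain ((EuclideanSpace.basisFun (Fin n) ℝ).toBasis)) = 1 := by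
  have hset : ZSpan.fundamentalDomain ((EuclideanSpace.basisFun (Fin n) ℝ).toBasis) =
      (MeasurableEquiv.toLp 2 (Fin n → ℝ)).symm ⁻¹' (Set.univ.pi fun _ => Set.Ico (0:ℝ) 1) := by
    ext x
    simp only [ZSpan.mem_fundamentalDomain, Set.mem_preimage, Set.mem_pi, Set.mem_univ,
      forall_true_left, OrthonormalBasis.coe_toBasis_repr_apply, EuclideanSpace.basisFun_repr,
      MeasurableEquiv.toLp_symm_apply]
  rw [hset, MeasurePreserving.measure_preimage
    (EuclideanSpace.volume_preserving_symm_measurableEquiv_toLp (Fin n))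
    (MeasurableSet.univ_pi (fun _ => measurableSet_Ico)).nullMeasurableSet]
  rw [volume_pi_pi]
  simp [Real.volume_Ico]

open MeasureTheory in
lemma covolume_eq_det_euclidean {n : ℕ} (Λ : Submodule ℤ (EuclideanSpace ℝ (Fin n)))
    [DiscreteTopology Λ] [IsZLattice ℝ Λ] (b : Basis (Fin n) ℤ Λ) :
    ZLattice.covolume Λ =
      |(Matrix.of fun i j => (b j : EuclideanSpace ℝ (Fin n)) i).det| := by
  classical
  rw [ZLattice.covolume_eq_det_mul_measureReal Λ volume b
    ((EuclideanSpace.basisFun (Fin n) ℝ).toBasis), measureReal_def, vol_fd_one, ENNReal.toReal_one, mul_one]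
  congr 1

lemma gram_det_eq_sq {n : ℕ} (v : Fin n → EuclideanSpace ℝ (Fin n)) :
    (myGram v).det = ((Matrix.of fun i j => v j i).det)^2 := by
  have h : myGram v =
      (Matrix.of fun i j => v j i).transpose * (Matrix.of fun i j => v j i) := by
    ext i j
    simp only [myGram, Matrix.mul_apply, Matrix.of_apply, Matrix.transpose_apply]
    rw [PiLp.inner_apply]
    exact Finset.sum_congr rfl fun k _ => by
      simp [RCLike.inner_apply, mul_comm]
  rw [h, Matrix.det_mul, Matrix.det_transpose]
  ring

lemma abs_le_csSup {n : ℕ} (v : EuclideanSpace ℝ (Fin n)) (k : Fin n) :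
    |v k| ≤ ⨆ j, |v j| :=
  le_ciSup (f := fun j => |v j|) (Set.Finite.bddAbove (Set.finite_range _)) k

lemma csSup_abs_nonneg {n : ℕ} (hn : 1 ≤ n) (v : EuclideanSpace ℝ (Fin n)) :
    0 ≤ ⨆ j, |v j| := by
  have : Nonempty (Fin n) := ⟨⟨0, hn⟩⟩
  exact le_trans (abs_nonneg _) (abs_le_csSup v ⟨0, hn⟩)

lemma hadamard_bound {n : ℕ} (hn : 1 ≤ n) (v : Fin n → EuclideanSpace ℝ (Fin n)) :
    |(Matrix.of fun i j => v j i).det| ≤ (n.factorial : ℝ) * ∏ i, (⨆ k, |v i k|) := by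
  classical
  rw [Matrix.det_apply]
  refine le_trans (Finset.abs_sum_le_sum_abs _ _) ?_
  have hterm : ∀ σ : Equiv.Perm (Fin n),
      |Equiv.Perm.sign σ • ∏ i, (Matrix.of fun i j => v j i) (σ i) i| ≤ ∏ i, (⨆ k, |v i k|) := by
    intro σ
    have h1 : |Equiv.Perm.sign σ • ∏ i, (Matrix.of fun i j => v j i) (σ i) i| =
        |∏ i, (Matrix.of fun i j => v j i) (σ i) i| := by
      rcases Int.units_eq_one_or (Equiv.Perm.sign σ) with h | h <;> simp [h, Units.smul_def]
    rw [h1, Finset.abs_prod]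
    refine Finset.prod_le_prod (fun i _ => abs_nonneg _) (fun i _ => ?_)
    exact abs_le_csSup (v i) (σ i)
  refine le_trans (Finset.sum_le_sum fun σ _ => hterm σ) ?_
  rw [Finset.sum_const, Finset.card_univ, Fintype.card_perm, nsmul_eq_mul, Fintype.card_fin]

section Main

open ZLattice Real

lemma coord_le_norm {n : ℕ} (x : EuclideanSpace ℝ (Fin n)) (k : Fin n) : |x k| ≤ ‖x‖ := by
  rw [EuclideanSpace.norm_eq, ← Real.sqrt_sq_eq_abs]
  apply Real.sqrt_le_sqrt
  have h := Finset.single_le_sum (f := fun i => ‖x i‖^2) (fun i _ => sq_nonneg _)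
    (Finset.mem_univ k)
  simpa [Real.norm_eq_abs, sq_abs] using h

/-- if every nonzero vector of every lattice in the diagonal orbit of `Λ`
satisfies `(max_i |x_i|)ⁿ √D ≥ ν`, then `Λ` has a reduced basis `v₁ ≤ … ≤ v_n` (in sup
norm) with `‖v₁‖ ≫ ν^{1/n} D^{−1/(2n)}`, `∏‖v_i‖ ≍ ν`, and `‖v_i‖ ≪ ν^{1/n} D^{(n−1)/(2n)}`. -/
theorem stmt_8 (n : ℕ) (hn : 1 ≤ n) :
    ∃ c₁ c₂ c₃ C : ℝ, 0 < c₁ ∧ 0 < c₂ ∧ 0 < c₃ ∧ 0 < C ∧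
      ∀ (Λ : Submodule ℤ (EuclideanSpace ℝ (Fin n)))
        [DiscreteTopology Λ] [IsZLattice ℝ Λ] (D : ℝ), 0 < D →
        (∀ a : Fin n → ℝ, (∀ i, 0 < a i) → ∏ i, a i = 1 →
          ∀ x ∈ Λ, x ≠ (0 : EuclideanSpace ℝ (Fin n)) →
            ZLattice.covolume Λ ≤ (⨆ i, |a i * x i|) ^ n * Real.sqrt D) →
        ∃ v : Basis (Fin n) ℤ Λ,
          (∀ i j : Fin n, i ≤ j →
            (⨆ k, |(v i : EuclideanSpace ℝ (Fin n)) k|) ≤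
              ⨆ k, |(v j : EuclideanSpace ℝ (Fin n)) k|) ∧
          (c₁ * (ZLattice.covolume Λ) ^ ((1 : ℝ) / n) * D ^ (-(1 / (2 * (n : ℝ)))) ≤
            ⨆ k, |(v ⟨0, hn⟩ : EuclideanSpace ℝ (Fin n)) k|) ∧
          (c₂ * ZLattice.covolume Λ ≤
            ∏ i, ⨆ k, |(v i : EuclideanSpace ℝ (Fin n)) k|) ∧
          ((∏ i, ⨆ k, |(v i : EuclideanSpace ℝ (Fin n)) k|) ≤ c₃ * ZLattice.covolume Λ) ∧
          (∀ i, (⨆ k, |(v i : EuclideanSpace ℝ (Fin n)) k|) ≤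
            C * (ZLattice.covolume Λ) ^ ((1 : ℝ) / n) * D ^ (((n : ℝ) - 1) / (2 * n))) := by
  classical
  obtain ⟨CH, hCH, Hherm⟩ := hermite_exists n
  have hn0 : (n : ℝ) ≠ 0 := Nat.cast_ne_zero.mpr (by omega)
  have hnpos : (0:ℝ) < n := by positivity
  refine ⟨1, 1/(n.factorial : ℝ), Real.sqrt CH, Real.sqrt CH, one_pos,
    by positivity, Real.sqrt_pos.mpr hCH, Real.sqrt_pos.mpr hCH, ?_⟩
  intro Λ _ _ D hD hyp
  set ν : ℝ := ZLattice.covolume Λ with hν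
  have hνpos : 0 < ν := ZLattice.covolume_pos Λ MeasureTheory.volume
  -- a ℤ-basis of Λ indexed by Fin n
  have hfree : Module.Free ℤ Λ := ZLattice.module_free ℝ Λ
  have hfin : Module.Finite ℤ Λ := ZLattice.module_finite ℝ Λ
  have hcard : Fintype.card (Module.Free.ChooseBasisIndex ℤ Λ) = n := by
    rw [← Module.finrank_eq_card_chooseBasisIndex, ZLattice.rank ℝ Λ, finrank_euclideanSpace_fin]
  let b : Basis (Fin n) ℤ Λ :=
    (Module.Free.chooseBasis ℤ Λ).reindex (Fintype.equivFinOfCardEq hcard)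
  have hvind : LinearIndependent ℝ (fun i => (b i : EuclideanSpace ℝ (Fin n))) := by
    have h1 := (Basis.ofZLatticeBasis ℝ Λ b).linearIndependent
    have h2 : ⇑(Basis.ofZLatticeBasis ℝ Λ b) = fun i => (b i : EuclideanSpace ℝ (Fin n)) :=
      funext fun i => Basis.ofZLatticeBasis_apply ℝ Λ b i
    rwa [h2] at h1
  obtain ⟨u, hspan_u, hind_u, hbound_u⟩ :=
    Hherm (EuclideanSpace ℝ (Fin n)) (fun i => (b i : EuclideanSpace ℝ (Fin n))) hvind
  have hΛspan : span ℤ (Set.range (fun i => (b i : EuclideanSpace ℝ (Fin n)))) = Λ :=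
    basis_coe_span Λ b
  have humem : ∀ i, u i ∈ Λ := by
    intro i
    rw [← hΛspan, ← hspan_u]
    exact subset_span (mem_range_self i)
  -- covolume squared equals gram det
  have hcov_b : ν = |(Matrix.of fun i j => (b j : EuclideanSpace ℝ (Fin n)) i).det| :=
    covolume_eq_det_euclidean Λ b
  have hgram : (myGram (fun i => (b i : EuclideanSpace ℝ (Fin n)))).det = ν^2 := by
    rw [gram_det_eq_sq, hcov_b, sq_abs]
  -- the final basis
  set u' : Fin n → Λ := fun i => ⟨u i, humem i⟩ with hu'
  have hu'ind : LinearIndependent ℤ u' := by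
    have hindZ : LinearIndependent ℤ u := hind_u.restrict_scalars zsmul_one_inj
    exact LinearIndependent.of_comp Λ.subtype hindZ
  have hu'span : ⊤ ≤ span ℤ (Set.range u') := by
    have hmap : Submodule.map Λ.subtype (span ℤ (Set.range u')) =
        Submodule.map Λ.subtype ⊤ := by
      rw [Submodule.map_span, Submodule.map_subtype_top]
      have : Λ.subtype '' Set.range u' = Set.range u := by
        rw [← Set.range_comp]; rfl
      rw [this, hspan_u, hΛspan]
    rw [Submodule.map_injective_of_injective Λ.injective_subtype hmap]
  let Bu : Basis (Fin n) ℤ Λ := Basis.mk hu'ind hu'span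
  set f : Fin n → ℝ := fun i => ⨆ k, |u i k| with hf
  set σ : Equiv.Perm (Fin n) := Tuple.sort f with hσ
  refine ⟨Bu.reindex σ.symm, ?_⟩
  have hvco : ∀ j : Fin n,
      ((Bu.reindex σ.symm j : Λ) : EuclideanSpace ℝ (Fin n)) = u (σ j) := by
    intro j
    rw [Basis.reindex_apply, Equiv.symm_symm]
    show ((Basis.mk hu'ind hu'span (σ j) : Λ) : EuclideanSpace ℝ (Fin n)) = u (σ j)
    rw [Basis.mk_apply]
  -- key lower bound for each nonzero lattice vector
  have hkey : ∀ i : Fin n, ν ^ ((1:ℝ)/n) * D ^ (-(1/(2*(n:ℝ)))) ≤ f i := by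
    intro i
    have hmem := humem i
    have hne : u i ≠ 0 := hind_u.ne_zero i
    have h1 := hyp (fun _ => 1) (fun _ => one_pos) (by simp) (u i) hmem hne
    have h2 : (⨆ k, |(1:ℝ) * u i k|) = f i := by
      rw [hf]
      simp only [one_mul]
    rw [h2] at h1
    have hfnn : 0 ≤ f i := csSup_abs_nonneg hn (u i)
    have hsD : Real.sqrt D = D ^ ((1:ℝ)/2) := by
      rw [Real.sqrt_eq_rpow]
    -- ν * D^{-1/2} ≤ (f i)^n
    have h3 : ν * D ^ (-(1:ℝ)/2) ≤ (f i)^n := by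
      have hDp : (0:ℝ) < D ^ ((1:ℝ)/2) := Real.rpow_pos_of_pos hD _
      have := mul_le_mul_of_nonneg_right h1 (le_of_lt (Real.rpow_pos_of_pos hD (-(1:ℝ)/2)))
      calc ν * D ^ (-(1:ℝ)/2) ≤ (f i)^n * Real.sqrt D * D ^ (-(1:ℝ)/2) := this
        _ = (f i)^n * (D ^ ((1:ℝ)/2) * D ^ (-(1:ℝ)/2)) := by rw [hsD]; ring
        _ = (f i)^n := by
            rw [← Real.rpow_add hD]
            norm_num
    have h4 : (ν * D ^ (-(1:ℝ)/2)) ^ ((1:ℝ)/n) ≤ ((f i)^n) ^ ((1:ℝ)/n) := by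
      apply Real.rpow_le_rpow (by positivity) h3 (by positivity)
    have h5 : ((f i)^n) ^ ((1:ℝ)/n) = f i := by
      rw [← Real.rpow_natCast (f i) n, ← Real.rpow_mul hfnn]
      rw [mul_one_div, div_self hn0, Real.rpow_one]
    have h6 : (ν * D ^ (-(1:ℝ)/2)) ^ ((1:ℝ)/n) =
        ν ^ ((1:ℝ)/n) * D ^ (-(1/(2*(n:ℝ)))) := by
      rw [Real.mul_rpow (le_of_lt hνpos) (by positivity)]
      congr 1
      rw [← Real.rpow_mul (le_of_lt hD)]
      congr 1
      field_simp
    rw [h6] at h4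
    rw [h5] at h4
    exact h4
  set mq : ℝ := ν ^ ((1:ℝ)/n) * D ^ (-(1/(2*(n:ℝ)))) with hmq
  have hmqpos : 0 < mq := by
    apply mul_pos (Real.rpow_pos_of_pos hνpos _) (Real.rpow_pos_of_pos hD _)
  -- product bounds
  have hne' : Nonempty (Fin n) := ⟨⟨0, hn⟩⟩
  have hNle : ∀ i, f i ≤ ‖u i‖ := by
    intro i
    apply ciSup_le
    intro k
    exact coord_le_norm (u i) k
  have hfnn : ∀ i, 0 ≤ f i := fun i => csSup_abs_nonneg hn (u i)
  have hprod_up : ∏ i, f i ≤ Real.sqrt CH * ν := by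
    have h1 : ∏ i, f i ≤ ∏ i, ‖u i‖ :=
      Finset.prod_le_prod (fun i _ => hfnn i) (fun i _ => hNle i)
    have h2 : (∏ i, ‖u i‖)^2 ≤ CH * ν^2 := by
      rw [← hgram]; exact hbound_u
    have h3 : ∏ i, ‖u i‖ ≤ Real.sqrt CH * ν := by
      have h4 : ∏ i, ‖u i‖ = Real.sqrt ((∏ i, ‖u i‖)^2) := by
        rw [Real.sqrt_sq (Finset.prod_nonneg fun i _ => norm_nonneg _)]
      rw [h4]
      calc Real.sqrt ((∏ i, ‖u i‖)^2) ≤ Real.sqrt (CH * ν^2) := Real.sqrt_le_sqrt h2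
        _ = Real.sqrt CH * ν := by
            rw [Real.sqrt_mul (le_of_lt hCH), Real.sqrt_sq (le_of_lt hνpos)]
    exact le_trans h1 h3
  have hprod_lo : (1/(n.factorial : ℝ)) * ν ≤ ∏ i, f i := by
    have h1 : ν ≤ (n.factorial : ℝ) * ∏ i, f i := by
      have hcovBu := covolume_eq_det_euclidean Λ Bu
      have hBuco : (fun j => (Bu j : EuclideanSpace ℝ (Fin n))) = u := by
        funext j
        show ((Basis.mk hu'ind hu'span j : Λ) : EuclideanSpace ℝ (Fin n)) = u j
        rw [Basis.mk_apply]
      rw [← hν] at hcovBu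
      calc ν = |(Matrix.of fun i j => (Bu j : EuclideanSpace ℝ (Fin n)) i).det| := hcovBu
        _ = |(Matrix.of fun i j => u j i).det| := by rw [show (fun (i j : Fin n) => (Bu j : EuclideanSpace ℝ (Fin n)) i) = fun i j => u j i from by funext i j; rw [congrFun hBuco j]]
        _ ≤ (n.factorial : ℝ) * ∏ i, f i := hadamard_bound hn u
    have hfact : (0:ℝ) < (n.factorial : ℝ) := by positivity
    rw [div_mul_eq_mul_div, one_mul, div_le_iff₀ hfact, mul_comm]
    exact h1
  -- now the five goals
  refine ⟨?_, ?_, ?_, ?_, ?_⟩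
  · intro i j hij
    simp only [hvco]
    exact Tuple.monotone_sort f hij
  · simp only [hvco]
    rw [one_mul]
    exact hkey (σ ⟨0, hn⟩)
  · simp only [hvco]
    rw [show (∏ i, ⨆ k, |u (σ i) k|) = ∏ i, f i from Equiv.prod_comp σ f]
    exact hprod_lo
  · simp only [hvco]
    rw [show (∏ i, ⨆ k, |u (σ i) k|) = ∏ i, f i from Equiv.prod_comp σ f]
    exact hprod_up
  · intro i
    simp only [hvco]
    -- f (σ i) ≤ √CH * ν^{1/n} * D^{(n-1)/(2n)}
    set X : ℝ := ν ^ ((1:ℝ)/n) * D ^ (((n:ℝ)-1)/(2*n)) with hX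
    have hXpos : 0 < X := by
      apply mul_pos (Real.rpow_pos_of_pos hνpos _) (Real.rpow_pos_of_pos hD _)
    have hid : mq^(n-1) * X = ν := by
      rw [hmq, hX]
      rw [mul_pow, ← Real.rpow_natCast (ν ^ ((1:ℝ)/n)) (n-1),
        ← Real.rpow_natCast (D ^ (-(1/(2*(n:ℝ))))) (n-1),
        ← Real.rpow_mul (le_of_lt hνpos), ← Real.rpow_mul (le_of_lt hD)]
      have hc : ((n-1 : ℕ) : ℝ) = (n:ℝ) - 1 := by
        push_cast [Nat.cast_sub hn]
        ring
      rw [hc]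
      rw [show (ν ^ ((1:ℝ)/n * ((n:ℝ)-1)) * D ^ (-(1/(2*(n:ℝ))) * ((n:ℝ)-1))) *
          (ν ^ ((1:ℝ)/n) * D ^ (((n:ℝ)-1)/(2*n))) =
          (ν ^ ((1:ℝ)/n * ((n:ℝ)-1)) * ν ^ ((1:ℝ)/n)) *
          (D ^ (-(1/(2*(n:ℝ))) * ((n:ℝ)-1)) * D ^ (((n:ℝ)-1)/(2*n))) from by ring]
      rw [← Real.rpow_add hνpos, ← Real.rpow_add hD]
      have e1 : (1:ℝ)/n * ((n:ℝ)-1) + (1:ℝ)/n = 1 := by field_simp; ring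
      have e2 : -(1/(2*(n:ℝ))) * ((n:ℝ)-1) + ((n:ℝ)-1)/(2*n) = 0 := by field_simp; ring
      rw [e1, e2, Real.rpow_one, Real.rpow_zero, mul_one]
    have hNi : f (σ i) * mq^(n-1) ≤ Real.sqrt CH * ν := by
      have h1 : mq^(n-1) ≤ ∏ j ∈ Finset.univ.erase (σ i), f j := by
        have h2 : ∏ j ∈ Finset.univ.erase (σ i), f j ≥
            ∏ j ∈ Finset.univ.erase (σ i), mq :=
          Finset.prod_le_prod (fun j _ => le_of_lt hmqpos) (fun j _ => hkey j)
        rwa [Finset.prod_const, Finset.card_erase_of_mem (Finset.mem_univ _),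
          Finset.card_univ, Fintype.card_fin] at h2
      calc f (σ i) * mq^(n-1) ≤ f (σ i) * ∏ j ∈ Finset.univ.erase (σ i), f j :=
            mul_le_mul_of_nonneg_left h1 (hfnn _)
        _ = ∏ j, f j := Finset.mul_prod_erase Finset.univ f (Finset.mem_univ _)
        _ ≤ Real.sqrt CH * ν := hprod_up
    have hfinal : f (σ i) ≤ Real.sqrt CH * X := by
      rw [← hid] at hNi
      have h2 : f (σ i) * mq^(n-1) ≤ (Real.sqrt CH * X) * mq^(n-1) := by
        calc f (σ i) * mq^(n-1) ≤ Real.sqrt CH * (mq^(n-1) * X) := hNi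
          _ = (Real.sqrt CH * X) * mq^(n-1) := by ring
      exact le_of_mul_le_mul_right h2 (by positivity)
    calc (⨆ k, |u (σ i) k|) = f (σ i) := rfl
      _ ≤ Real.sqrt CH * X := hfinal
      _ = Real.sqrt CH * ν ^ ((1:ℝ)/n) * D ^ (((n:ℝ)-1)/(2*n)) := by rw [hX]; ring

end Main
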